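/- The function F(h) = \sum_{n \in \Z} (1 - 4h^2 n^2) exp(-2 h^2 n^2) (for h > 0) satisfies F(h) \to 1 as h \to \infty and F(h) \to 0 as h \to 0^+. -/

import Mathlib

open Filter

/-- The distribution function of the maximum of a three-dimensional Bessel bridge
of duration 1. -/
noncomputable def besselBridgeMaxCDF (h : ℝ) : ℝ :=
  ∑' n : ℤ, (1 - 4 * h ^ 2 * (n : ℝ) ^ 2) * Real.exp (-2 * h ^ 2 * (n : ℝ) ^ 2)

section Aux
open Real


lemma sum_nat_pow_exp (c : ℝ) (hc : 0 < c) (k : ℕ) :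
    Summable (fun n : ℕ => (n:ℝ)^k * Real.exp (-(c * (n:ℝ)^2))) := by
  have hr : ‖Real.exp (-c)‖ < 1 := by
    rw [Real.norm_eq_abs, abs_of_pos (Real.exp_pos _)]
    exact Real.exp_lt_one_iff.mpr (by linarith)
  refine Summable.of_nonneg_of_le (fun n => ?_) (fun n => ?_)
    (summable_pow_mul_geometric_of_norm_lt_one k hr)
  · positivity
  · have h1 : Real.exp (-(c * (n:ℝ)^2)) ≤ Real.exp (-c) ^ n := by
      rw [← Real.exp_nat_mul]
      apply Real.exp_le_exp.mpr
      have hn : (n:ℝ) ≤ (n:ℝ)^2 := by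
        rcases Nat.eq_zero_or_pos n with h | h
        · simp [h]
        · have h1 : (1:ℝ) ≤ (n:ℝ) := by exact_mod_cast h
          nlinarith
      nlinarith
    have h2 : (0:ℝ) ≤ (n:ℝ)^k := by positivity
    nlinarith [mul_le_mul_of_nonneg_left h1 h2]

lemma sum_int_pow_exp (c : ℝ) (hc : 0 < c) (k : ℕ) :
    Summable (fun n : ℤ => ((n:ℝ)^2)^k * Real.exp (-(c * (n:ℝ)^2))) := by
  apply Summable.of_nat_of_neg
  · simpa [← pow_mul, mul_comm] using sum_nat_pow_exp c hc (2*k)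
  · simpa [← pow_mul, mul_comm] using sum_nat_pow_exp c hc (2*k)

lemma sum_int_exp (c : ℝ) (hc : 0 < c) :
    Summable (fun n : ℤ => Real.exp (-(c * (n:ℝ)^2))) := by
  simpa using sum_int_pow_exp c hc 0

lemma sum_int_sq_exp (c : ℝ) (hc : 0 < c) :
    Summable (fun n : ℤ => (n:ℝ)^2 * Real.exp (-(c * (n:ℝ)^2))) := by
  simpa using sum_int_pow_exp c hc 1

lemma sum_int_affine (A B c : ℝ) (hc : 0 < c) :
    Summable (fun n : ℤ => (A + B * (n:ℝ)^2) * Real.exp (-(c * (n:ℝ)^2))) := by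
  have := ((sum_int_exp c hc).mul_left A).add ((sum_int_sq_exp c hc).mul_left B)
  convert this using 2 with n
  · rfl
  ring

noncomputable def Efun (n : ℤ) (z : ℝ) : ℝ := -(π^2*(n:ℝ)^2/2) * (z^2)⁻¹

lemma hasDerivAt_term (n : ℤ) (z : ℝ) :
    HasDerivAt (fun z : ℝ => z * Real.exp (-(2*z^2*(n:ℝ)^2)))
      ((1 - 4*z^2*(n:ℝ)^2) * Real.exp (-(2*z^2*(n:ℝ)^2))) z := by
  have h1 : HasDerivAt (fun z : ℝ => -(2*z^2*(n:ℝ)^2)) (-(4*z*(n:ℝ)^2)) z := by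
    have := ((hasDerivAt_pow 2 z).const_mul (2:ℝ)).mul_const ((n:ℝ)^2)
    convert this.neg using 1
    · rfl
    · rfl
    · funext y; simp only [Pi.neg_apply]
    · ring
  have h2 := (hasDerivAt_id z).mul h1.exp
  convert h2 using 1
  · rfl
  · rfl
  · rfl
  simp only [id_eq]
  ring

lemma hasDerivAt_K (h : ℝ) (hh : 0 < h) :
    HasDerivAt (fun z : ℝ => ∑' n : ℤ, z * Real.exp (-(2*z^2*(n:ℝ)^2)))
      (∑' n : ℤ, (1 - 4*h^2*(n:ℝ)^2) * Real.exp (-(2*h^2*(n:ℝ)^2))) h := by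
  have hsum : Summable (fun n : ℤ =>
      (1 + 4*(h+1)^2*(n:ℝ)^2) * Real.exp (-(h^2/2 * (n:ℝ)^2))) :=
    sum_int_affine 1 (4*(h+1)^2) _ (by positivity)
  have hmem : h ∈ Set.Ioo (h/2) (h+1) := Set.mem_Ioo.mpr ⟨by linarith, by linarith⟩
  refine hasDerivAt_tsum_of_isPreconnected (y₀ := h) hsum (isOpen_Ioo (a := h/2) (b := h+1))
    (isPreconnected_Ioo) (fun n y _ => hasDerivAt_term n y) (fun n y hy => ?_)
    hmem ?_ hmem
  · obtain ⟨hy1, hy2⟩ := hy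
    have hy0 : 0 < y := lt_trans (by linarith) hy1
    rw [Real.norm_eq_abs, abs_mul, Real.abs_exp]
    have hn2 : (0:ℝ) ≤ (n:ℝ)^2 := sq_nonneg _
    have hub : y^2 ≤ (h+1)^2 := by nlinarith
    have hlb : h^2/4 ≤ y^2 := by nlinarith
    have hub' := mul_le_mul_of_nonneg_right hub hn2
    have hlb' := mul_le_mul_of_nonneg_right hlb hn2
    apply mul_le_mul
    · rw [abs_le]
      constructor <;> nlinarith
    · apply Real.exp_le_exp.mpr
      nlinarith
    · positivity
    · positivity
  · have := (sum_int_affine h 0 (2*h^2) (by positivity))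
    convert this using 2 with n
    · rfl
    ring

lemma hasDerivAt_term2 (n : ℤ) (z : ℝ) (hz : 0 < z) :
    HasDerivAt (fun z : ℝ => Real.sqrt (π/2) * Real.exp (Efun n z))
      (Real.sqrt (π/2) * (π^2*(n:ℝ)^2/z^3) * Real.exp (Efun n z)) z := by
  have hz2 : (z:ℝ)^2 ≠ 0 := by positivity
  have h1 : HasDerivAt (fun z : ℝ => (z^2)⁻¹) (-(2*z^1)/(z^2)^2) z :=
    (hasDerivAt_pow 2 z).inv hz2
  have h2 := (h1.const_mul (-(π^2*(n:ℝ)^2/2))).exp.const_mul (Real.sqrt (π/2))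
  convert h2 using 1
  · rfl
  · rfl
  · rfl
  unfold Efun
  field_simp

lemma hasDerivAt_R (h : ℝ) (hh : 0 < h) :
    HasDerivAt (fun z : ℝ => ∑' n : ℤ, Real.sqrt (π/2) * Real.exp (Efun n z))
      (∑' n : ℤ, Real.sqrt (π/2) * (π^2*(n:ℝ)^2/h^3) * Real.exp (Efun n h)) h := by
  have hc : 0 < π^2/2 * ((h+1)^2)⁻¹ := by positivity
  have hsum : Summable (fun n : ℤ =>
      (0 + (Real.sqrt (π/2) * π^2/(h/2)^3) * (n:ℝ)^2) *
        Real.exp (-((π^2/2 * ((h+1)^2)⁻¹) * (n:ℝ)^2))) :=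
    sum_int_affine 0 _ _ hc
  have hmem : h ∈ Set.Ioo (h/2) (h+1) := Set.mem_Ioo.mpr ⟨by linarith, by linarith⟩
  refine hasDerivAt_tsum_of_isPreconnected (y₀ := h) hsum (isOpen_Ioo (a := h/2) (b := h+1))
    (isPreconnected_Ioo)
    (fun n y hy => hasDerivAt_term2 n y (lt_trans (by linarith) hy.1)) (fun n y hy => ?_)
    hmem ?_ hmem
  · obtain ⟨hy1, hy2⟩ := hy
    have hy0 : 0 < y := lt_trans (by linarith) hy1
    have hn2 : (0:ℝ) ≤ (n:ℝ)^2 := sq_nonneg _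
    have hsq : 0 < Real.sqrt (π/2) := Real.sqrt_pos.mpr (by positivity)
    rw [Real.norm_eq_abs, abs_mul, Real.abs_exp, abs_of_nonneg (by positivity)]
    rw [zero_add]
    apply mul_le_mul
    · have h3 : (h/2)^3 ≤ y^3 := pow_le_pow_left₀ (by positivity) hy1.le 3
      have h4 : π^2*(n:ℝ)^2/y^3 ≤ π^2*(n:ℝ)^2/(h/2)^3 :=
        div_le_div_of_nonneg_left (by positivity) (by positivity) h3
      calc Real.sqrt (π/2) * (π^2*(n:ℝ)^2/y^3)
          ≤ Real.sqrt (π/2) * (π^2*(n:ℝ)^2/(h/2)^3) := by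
            exact mul_le_mul_of_nonneg_left h4 hsq.le
        _ = Real.sqrt (π/2) * π^2/(h/2)^3 * (n:ℝ)^2 := by ring
    · apply Real.exp_le_exp.mpr
      unfold Efun
      have hinv : ((h+1)^2)⁻¹ ≤ (y^2)⁻¹ := by
        apply inv_anti₀ (by positivity)
        nlinarith
      calc -(π^2*(n:ℝ)^2/2) * (y^2)⁻¹ ≤ -(π^2*(n:ℝ)^2/2) * ((h+1)^2)⁻¹ := by
            exact mul_le_mul_of_nonpos_left hinv (neg_nonpos.mpr (by positivity))
        _ = -(π^2/2 * ((h+1)^2)⁻¹ * (n:ℝ)^2) := by ring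
    · positivity
    · positivity
  · have hs2 : Summable (fun n : ℤ =>
        Real.sqrt (π/2) * Real.exp (-((π^2/2*(h^2)⁻¹) * (n:ℝ)^2))) :=
      (sum_int_exp _ (by positivity)).mul_left _
    convert hs2 using 3 with n
    · rfl
    unfold Efun
    ring

lemma key_identity (z : ℝ) (hz : 0 < z) :
    ∑' n : ℤ, z * Real.exp (-(2*z^2*(n:ℝ)^2))
      = ∑' n : ℤ, Real.sqrt (π/2) * Real.exp (Efun n z) := by
  rw [tsum_mul_left, tsum_mul_left]
  have hπ : 0 < π := Real.pi_pos
  have ha : 0 < 2*z^2/π := by positivity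
  have hid := Real.tsum_exp_neg_mul_int_sq ha
  have e1 : ∀ n : ℤ, Real.exp (-(2*z^2*(n:ℝ)^2)) = Real.exp (-π * (2*z^2/π) * (n:ℝ)^2) := by
    intro n; congr 1; field_simp
  have e2 : ∀ n : ℤ, Real.exp (-π / (2*z^2/π) * (n:ℝ)^2) = Real.exp (Efun n z) := by
    intro n; unfold Efun; congr 1
    have hq : -π / (2*z^2/π) = -(π^2/2) * (z^2)⁻¹ := by
      field_simp
    rw [hq]; ring
  rw [tsum_congr e1, hid, tsum_congr e2, ← mul_assoc]
  congr 1
  rw [← Real.sqrt_eq_rpow, show (2*z^2/π) = (z^2) * (2/π) by ring,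
    Real.sqrt_mul (sq_nonneg z), Real.sqrt_sq hz.le]
  have h2π : 0 < Real.sqrt (2/π) := Real.sqrt_pos.mpr (by positivity)
  have key : Real.sqrt (2/π) * Real.sqrt (π/2) = 1 := by
    rw [← Real.sqrt_mul (by positivity)]
    have : (2/π) * (π/2) = 1 := by field_simp
    rw [this, Real.sqrt_one]
  field_simp
  nlinarith [key]

lemma F_eq (h : ℝ) (hh : 0 < h) :
    besselBridgeMaxCDF h
      = ∑' n : ℤ, Real.sqrt (π/2) * (π^2*(n:ℝ)^2/h^3) * Real.exp (Efun n h) := by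
  have hK := hasDerivAt_K h hh
  have hR := hasDerivAt_R h hh
  have heq : (fun z : ℝ => ∑' n : ℤ, Real.sqrt (π/2) * Real.exp (Efun n z))
      =ᶠ[nhds h] (fun z : ℝ => ∑' n : ℤ, z * Real.exp (-(2*z^2*(n:ℝ)^2))) :=
    Filter.eventuallyEq_of_mem (Ioi_mem_nhds hh) (fun z hz => (key_identity z hz).symm)
  have hK' := hK.congr_of_eventuallyEq heq
  have huniq := hR.unique hK'
  rw [huniq]
  unfold besselBridgeMaxCDF
  apply tsum_congr
  intro n
  rw [show (-2*h^2*(n:ℝ)^2) = -(2*h^2*(n:ℝ)^2) by ring]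

lemma sum_main (h : ℝ) (hh : 0 < h) :
    Summable (fun n : ℤ => (1 - 4*h^2*(n:ℝ)^2) * Real.exp (-2*h^2*(n:ℝ)^2)) := by
  have := sum_int_affine 1 (-(4*h^2)) (2*h^2) (by positivity)
  convert this using 2 with n
  ring_nf

lemma bound_atTop (h : ℝ) (hh : 1 ≤ h) :
    |besselBridgeMaxCDF h - 1|
      ≤ (5 * Real.exp 1 * ∑' n : ℤ, Real.exp (-(1*(n:ℝ)^2))) * Real.exp (-h^2) := by
  have hh0 : 0 < h := lt_of_lt_of_le one_pos hh
  have hsumf := sum_main h hh0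
  have hsplit := Summable.tsum_eq_add_tsum_ite hsumf 0
  have hzero : (1 - 4*h^2*((0:ℤ):ℝ)^2) * Real.exp (-2*h^2*((0:ℤ):ℝ)^2) = 1 := by
    norm_num
  unfold besselBridgeMaxCDF
  rw [hsplit, hzero, add_sub_cancel_left]
  set C : ℝ := 5 * Real.exp 1 * Real.exp (-h^2) with hC
  have hCpos : 0 < C := by positivity
  have hbd : ∀ n : ℤ,
      ‖if n = 0 then (0:ℝ) else (1 - 4*h^2*(n:ℝ)^2) * Real.exp (-2*h^2*(n:ℝ)^2)‖
        ≤ C * Real.exp (-(1*(n:ℝ)^2)) := by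
    intro n
    by_cases hn : n = 0
    · simp [hn]
      positivity
    · simp only [if_neg hn]
      have hn1 : (1:ℝ) ≤ (n:ℝ)^2 := by
        have : (1:ℝ) ≤ |(n:ℝ)| := by
          rw [← Int.cast_abs]
          exact_mod_cast Int.one_le_abs (by omega)
        nlinarith [abs_nonneg (n:ℝ), sq_abs (n:ℝ)]
      set x : ℝ := h^2*(n:ℝ)^2 with hx
      have hx1 : 1 ≤ x := by nlinarith
      have hex : Real.exp (-2*h^2*(n:ℝ)^2) = Real.exp (-x) * Real.exp (-x) := by
        rw [← Real.exp_add]; congr 1; rw [hx]; ring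
      have e3 : (1+4*x) * Real.exp (-x) ≤ 5 := by
        have hxe : x + 1 ≤ Real.exp x := Real.add_one_le_exp x
        have h5 : 1 + 4*x ≤ 5 * Real.exp x := by nlinarith
        have hepos : 0 < Real.exp (-x) := Real.exp_pos _
        have := mul_le_mul_of_nonneg_right h5 hepos.le
        rwa [mul_assoc, ← Real.exp_add, add_neg_cancel, Real.exp_zero, mul_one] at this
      have e2 : Real.exp (-x) ≤ Real.exp 1 * (Real.exp (-h^2) * Real.exp (-(1*(n:ℝ)^2))) := by
        rw [← Real.exp_add, ← Real.exp_add]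
        apply Real.exp_le_exp.mpr
        have hh2 : (1:ℝ) ≤ h^2 := by nlinarith
        have hmul := mul_le_mul_of_nonneg_right hh2 (show (0:ℝ) ≤ (n:ℝ)^2 - 1 by linarith)
        rw [hx]; nlinarith
      rw [norm_mul, Real.norm_eq_abs, Real.norm_eq_abs, Real.abs_exp, hex, ← mul_assoc]
      have habs : |1 - 4*h^2*(n:ℝ)^2| ≤ 1 + 4*x := by
        rw [abs_le]; constructor <;> nlinarith
      have step1 : |1 - 4*h^2*(n:ℝ)^2| * Real.exp (-x) ≤ 5 := by
        calc |1 - 4*h^2*(n:ℝ)^2| * Real.exp (-x) ≤ (1+4*x) * Real.exp (-x) :=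
              mul_le_mul_of_nonneg_right habs (Real.exp_pos _).le
          _ ≤ 5 := e3
      calc |1 - 4*h^2*(n:ℝ)^2| * Real.exp (-x) * Real.exp (-x)
          ≤ 5 * Real.exp (-x) := mul_le_mul_of_nonneg_right step1 (Real.exp_pos _).le
        _ ≤ 5 * (Real.exp 1 * (Real.exp (-h^2) * Real.exp (-(1*(n:ℝ)^2)))) :=
            mul_le_mul_of_nonneg_left e2 (by norm_num)
        _ = C * Real.exp (-(1*(n:ℝ)^2)) := by rw [hC]; ring
  have hgs : HasSum (fun n : ℤ => C * Real.exp (-(1*(n:ℝ)^2)))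
      (C * ∑' n : ℤ, Real.exp (-(1*(n:ℝ)^2))) :=
    ((sum_int_exp 1 one_pos).hasSum).mul_left C
  have := tsum_of_norm_bounded hgs hbd
  rw [Real.norm_eq_abs] at this
  calc |∑' n : ℤ, if n = 0 then (0:ℝ)
          else (1 - 4*h^2*(n:ℝ)^2) * Real.exp (-2*h^2*(n:ℝ)^2)|
      ≤ C * ∑' n : ℤ, Real.exp (-(1*(n:ℝ)^2)) := this
    _ = (5 * Real.exp 1 * ∑' n : ℤ, Real.exp (-(1*(n:ℝ)^2))) * Real.exp (-h^2) := by
        rw [hC]; ring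

lemma tendsto_atTop_part : Tendsto besselBridgeMaxCDF atTop (nhds 1) := by
  rw [tendsto_iff_dist_tendsto_zero]
  simp only [Real.dist_eq]
  set c : ℝ := 5 * Real.exp 1 * ∑' n : ℤ, Real.exp (-(1*(n:ℝ)^2)) with hc
  have h1 : Tendsto (fun h : ℝ => Real.exp (-h^2)) atTop (nhds 0) := by
    have := Real.tendsto_exp_atBot.comp
      (tendsto_neg_atTop_atBot.comp (tendsto_pow_atTop two_ne_zero))
    simpa [Function.comp] using this
  have h2 : Tendsto (fun h : ℝ => c * Real.exp (-h^2)) atTop (nhds 0) := by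
    simpa using h1.const_mul c
  refine squeeze_zero' (Eventually.of_forall fun h => abs_nonneg _) ?_ h2
  filter_upwards [eventually_ge_atTop (1:ℝ)] with h hh
  rw [hc]
  exact bound_atTop h hh

lemma bound_zero (h : ℝ) (hh0 : 0 < h) (hh1 : h ≤ 1) :
    besselBridgeMaxCDF h
      ≤ (Real.sqrt (π/2) * π^2 * (∑' n : ℤ, (n:ℝ)^2 * Real.exp (-(π^2/4*(n:ℝ)^2))))
          * ((h^3)⁻¹ * Real.exp (-(π^2/4 * (h^2)⁻¹))) := by
  rw [F_eq h hh0]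
  set Ch : ℝ := Real.sqrt (π/2) * π^2 * ((h^3)⁻¹ * Real.exp (-(π^2/4 * (h^2)⁻¹))) with hCh
  have hπ : 0 < π := Real.pi_pos
  have hChpos : 0 < Ch := by positivity
  have hu : 1 ≤ (h^2)⁻¹ := by
    have h2 : h^2 ≤ 1 := by nlinarith
    have h2p : (0:ℝ) < h^2 := by positivity
    simpa using inv_anti₀ h2p h2
  have hbd : ∀ n : ℤ,
      Real.sqrt (π/2) * (π^2*(n:ℝ)^2/h^3) * Real.exp (Efun n h)
        ≤ Ch * ((n:ℝ)^2 * Real.exp (-(π^2/4*(n:ℝ)^2))) := by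
    intro n
    by_cases hn : n = 0
    · simp [hn, Efun]
    · have hn1 : (1:ℝ) ≤ (n:ℝ)^2 := by
        have : (1:ℝ) ≤ |(n:ℝ)| := by
          rw [← Int.cast_abs]
          exact_mod_cast Int.one_le_abs (by omega)
        nlinarith [abs_nonneg (n:ℝ), sq_abs (n:ℝ)]
      have hexp : Real.exp (Efun n h)
          ≤ Real.exp (-(π^2/4 * (h^2)⁻¹)) * Real.exp (-(π^2/4*(n:ℝ)^2)) := by
        rw [← Real.exp_add]
        apply Real.exp_le_exp.mpr
        unfold Efun
        set u : ℝ := (h^2)⁻¹ with hud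
        have key : π^2*(n:ℝ)^2/2 * u ≥ π^2/4 * u + π^2/4*(n:ℝ)^2 := by
          have h1 : (0:ℝ) ≤ ((n:ℝ)^2 - 1) * (u - 1) :=
            mul_nonneg (by linarith) (by linarith)
          nlinarith [sq_nonneg π, mul_pos hπ hπ]
        linarith
      calc Real.sqrt (π/2) * (π^2*(n:ℝ)^2/h^3) * Real.exp (Efun n h)
          ≤ Real.sqrt (π/2) * (π^2*(n:ℝ)^2/h^3)
              * (Real.exp (-(π^2/4 * (h^2)⁻¹)) * Real.exp (-(π^2/4*(n:ℝ)^2))) :=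
            mul_le_mul_of_nonneg_left hexp (by positivity)
        _ = Ch * ((n:ℝ)^2 * Real.exp (-(π^2/4*(n:ℝ)^2))) := by
            rw [hCh]; field_simp
  have hs1 : Summable (fun n : ℤ =>
      Real.sqrt (π/2) * (π^2*(n:ℝ)^2/h^3) * Real.exp (Efun n h)) := by
    have := sum_int_affine 0 (Real.sqrt (π/2) * π^2/h^3) (π^2/2 * (h^2)⁻¹) (by positivity)
    convert this using 2 with n
    unfold Efun
    rw [show -(π^2*(n:ℝ)^2/2) * (h^2)⁻¹ = -(π^2/2 * (h^2)⁻¹ * (n:ℝ)^2) by ring]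
    ring
  have hs2 : Summable (fun n : ℤ => Ch * ((n:ℝ)^2 * Real.exp (-(π^2/4*(n:ℝ)^2)))) :=
    (sum_int_sq_exp _ (by positivity)).mul_left Ch
  calc (∑' n : ℤ, Real.sqrt (π/2) * (π^2*(n:ℝ)^2/h^3) * Real.exp (Efun n h))
      ≤ ∑' n : ℤ, Ch * ((n:ℝ)^2 * Real.exp (-(π^2/4*(n:ℝ)^2))) :=
        Summable.tsum_le_tsum hbd hs1 hs2
    _ = Ch * ∑' n : ℤ, (n:ℝ)^2 * Real.exp (-(π^2/4*(n:ℝ)^2)) := tsum_mul_left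
    _ = (Real.sqrt (π/2) * π^2 * (∑' n : ℤ, (n:ℝ)^2 * Real.exp (-(π^2/4*(n:ℝ)^2))))
          * ((h^3)⁻¹ * Real.exp (-(π^2/4 * (h^2)⁻¹))) := by rw [hCh]; ring

lemma tendsto_zero_part :
    Tendsto besselBridgeMaxCDF (nhdsWithin 0 (Set.Ioi 0)) (nhds 0) := by
  have hπ : 0 < π := Real.pi_pos
  set S : ℝ := Real.sqrt (π/2) * π^2 * (∑' n : ℤ, (n:ℝ)^2 * Real.exp (-(π^2/4*(n:ℝ)^2)))
    with hS
  apply squeeze_zero'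
  · filter_upwards [self_mem_nhdsWithin] with h hh
    rw [F_eq h hh]
    apply tsum_nonneg
    intro n
    have : 0 < h := hh
    positivity
  · filter_upwards [self_mem_nhdsWithin,
      eventually_nhdsWithin_of_eventually_nhds (eventually_le_nhds one_pos)] with h hh h1
    exact bound_zero h hh h1
  · -- Tendsto (fun h => S * ((h^3)⁻¹ * exp(-(π^2/4*(h^2)⁻¹)))) (𝓝[>]0) (𝓝 0)
    have hcomp : Tendsto (fun y : ℝ => S * (y^3 * Real.exp (-(π^2/4*y^2)))) atTop (nhds 0) := by
      have hg : Tendsto (fun y : ℝ => y^3 * Real.exp (-(π^2/4*y^2))) atTop (nhds 0) := by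
        apply squeeze_zero'
        · filter_upwards [eventually_ge_atTop (0:ℝ)] with y hy
          positivity
        · filter_upwards [eventually_ge_atTop (max 1 (4/π^2))] with y hy
          have hy1 : (1:ℝ) ≤ y := le_trans (le_max_left _ _) hy
          have hy2 : 4/π^2 ≤ y := le_trans (le_max_right _ _) hy
          have : y ≤ π^2/4*y^2 := by
            rw [div_le_iff₀ (by positivity)] at hy2
            nlinarith
          have := Real.exp_le_exp.mpr (neg_le_neg this)
          exact mul_le_mul_of_nonneg_left this (by positivity)
        · exact tendsto_pow_mul_exp_neg_atTop_nhds_zero 3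
      simpa using hg.const_mul S
    have hinv : Tendsto (fun h : ℝ => h⁻¹) (nhdsWithin 0 (Set.Ioi 0)) atTop :=
      tendsto_inv_nhdsGT_zero
    have := hcomp.comp hinv
    apply this.congr'
    filter_upwards [self_mem_nhdsWithin] with h hh
    have hh0 : (0:ℝ) < h := hh
    simp only [Function.comp]
    rw [inv_pow, inv_pow]

theorem besselBridgeMaxCDF_limits :
    Tendsto besselBridgeMaxCDF atTop (nhds 1) ∧
      Tendsto besselBridgeMaxCDF (nhdsWithin 0 (Set.Ioi 0)) (nhds 0) :=
  ⟨tendsto_atTop_part, tendsto_zero_part⟩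

end Aux
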